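/- arXiv:1402.5761 — 3 statements merged into one kernel-verified Lean document; each statement's English description precedes it below -/
import Mathlib

section
/- Let q be a ℂ-dual quaternion. Then (I·1 + 𝐢)·q = 0 and q·(I·1 − 𝐢) = 0 both hold if and only if there exist complex numbers a, b such that q = (a·1 + b·ε)·(𝐣 + I·𝐤). In other words, the simultaneous solutions of these two equations are exactly the dual-complex scalar multiples of 𝐣 + I·𝐤. -/
open Quaternion TrivSqZeroExt DualNumber

noncomputable section

/-- The ℂ-dual quaternions. -/
abbrev DQ : Type := DualNumber (Quaternion ℂ)

/-- The quaternion unit 𝐢, viewed as a dual quaternion. -/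
def qi : DQ := inl (⟨0,1,0,0⟩ : ℍ[ℂ])
/-- The quaternion unit 𝐣, viewed as a dual quaternion. -/
def qj : DQ := inl (⟨0,0,1,0⟩ : ℍ[ℂ])
/-- The quaternion unit 𝐤, viewed as a dual quaternion. -/
def qk : DQ := inl (⟨0,0,0,1⟩ : ℍ[ℂ])

/-- A complex scalar, viewed as a dual quaternion. -/
def cs (a : ℂ) : DQ := inl (algebraMap ℂ ℍ[ℂ] a)

theorem DQ.fst_qi_re : (fst qi).re = 0 := rfl
theorem DQ.fst_qi_imI : (fst qi).imI = 1 := rfl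
theorem DQ.fst_qi_imJ : (fst qi).imJ = 0 := rfl
theorem DQ.fst_qi_imK : (fst qi).imK = 0 := rfl
theorem DQ.snd_qi : snd qi = 0 := rfl
theorem DQ.fst_qj_re : (fst qj).re = 0 := rfl
theorem DQ.fst_qj_imI : (fst qj).imI = 0 := rfl
theorem DQ.fst_qj_imJ : (fst qj).imJ = 1 := rfl
theorem DQ.fst_qj_imK : (fst qj).imK = 0 := rfl
theorem DQ.snd_qj : snd qj = 0 := rfl
theorem DQ.fst_qk_re : (fst qk).re = 0 := rfl
theorem DQ.fst_qk_imI : (fst qk).imI = 0 := rfl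
theorem DQ.fst_qk_imJ : (fst qk).imJ = 0 := rfl
theorem DQ.fst_qk_imK : (fst qk).imK = 1 := rfl
theorem DQ.snd_qk : snd qk = 0 := rfl
theorem DQ.fst_cs (a : ℂ) : fst (cs a) = algebraMap ℂ ℍ[ℂ] a := rfl
theorem DQ.snd_cs (a : ℂ) : snd (cs a) = 0 := rfl

theorem DQ.ext_iff' (x y : DQ) : x = y ↔ (fst x = fst y ∧ snd x = snd y) := by
  constructor
  · rintro rfl; exact ⟨rfl, rfl⟩
  · rintro ⟨ha, hb⟩; exact TrivSqZeroExt.ext ha hb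

/-- The simultaneous solutions of `(I + 𝐢)q = 0` and `q(I - 𝐢) = 0` are exactly the
dual-complex scalar multiples of `𝐣 + I𝐤`. -/
theorem solutions_of_bond_equations (q : DQ) :
    ((cs Complex.I + qi) * q = 0 ∧ q * (cs Complex.I - qi) = 0) ↔
      ∃ a b : ℂ, q = (cs a + cs b * ε) * (qj + cs Complex.I * qk) := by
  constructor
  · rintro ⟨h1, h2⟩
    have hf1 := congrArg fst h1
    have hs1 := congrArg snd h1
    have hf2 := congrArg fst h2
    have hs2 := congrArg snd h2
    simp only [DQ.fst_cs, DQ.snd_cs, DQ.fst_qi_re, DQ.fst_qi_imI, DQ.fst_qi_imJ, DQ.fst_qi_imK, DQ.snd_qi, fst_mul, DualNumber.snd_mul, fst_add, snd_add, fst_sub, snd_sub,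
      fst_inl, snd_inl, fst_zero, snd_zero, add_zero, zero_add, zero_mul, mul_zero,
      sub_zero, zero_sub, Quaternion.ext_iff, Quaternion.re_mul, Quaternion.imI_mul,
      Quaternion.imJ_mul, Quaternion.imK_mul, Quaternion.re_add, Quaternion.imI_add,
      Quaternion.imJ_add, Quaternion.imK_add, Quaternion.re_sub, Quaternion.imI_sub,
      Quaternion.imJ_sub, Quaternion.imK_sub, Quaternion.re_zero, Quaternion.imI_zero,
      Quaternion.imJ_zero, Quaternion.imK_zero, Quaternion.algebraMap_def, Quaternion.re_coe,
      Quaternion.imI_coe, Quaternion.imJ_coe, Quaternion.imK_coe] at hf1 hs1 hf2 hs2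
    obtain ⟨e1, e2, e3, e4⟩ := hf1
    obtain ⟨f1, f2, f3, f4⟩ := hs1
    obtain ⟨g1, g2, g3, g4⟩ := hf2
    obtain ⟨k1, k2, k3, k4⟩ := hs2
    refine ⟨(fst q).imJ, (snd q).imJ, ?_⟩
    rw [DQ.ext_iff']
    simp only [DQ.fst_cs, DQ.snd_cs, DQ.fst_qi_re, DQ.fst_qi_imI, DQ.fst_qi_imJ, DQ.fst_qi_imK, DQ.snd_qi, DQ.fst_qj_re, DQ.fst_qj_imI, DQ.fst_qj_imJ, DQ.fst_qj_imK, DQ.snd_qj, DQ.fst_qk_re, DQ.fst_qk_imI, DQ.fst_qk_imJ, DQ.fst_qk_imK,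
        DQ.snd_qk, DualNumber.fst_eps, DualNumber.snd_eps, fst_mul, DualNumber.snd_mul, fst_add, snd_add,
      fst_sub, snd_sub, fst_inl, snd_inl, fst_inr, snd_inr, fst_zero, snd_zero, add_zero,
      zero_add, zero_mul, mul_zero, mul_one, one_mul, sub_zero, zero_sub, Quaternion.ext_iff,
      Quaternion.re_mul, Quaternion.imI_mul,
      Quaternion.imJ_mul, Quaternion.imK_mul, Quaternion.re_add, Quaternion.imI_add,
      Quaternion.imJ_add, Quaternion.imK_add, Quaternion.re_zero, Quaternion.imI_zero,
      Quaternion.imJ_zero, Quaternion.imK_zero, Quaternion.algebraMap_def, Quaternion.re_coe,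
      Quaternion.imI_coe, Quaternion.imJ_coe, Quaternion.imK_coe]
    refine ⟨⟨?_, ?_, trivial, ?_⟩, ?_, ?_, trivial, ?_⟩
    · linear_combination (-Complex.I/2) * e1 + (-Complex.I/2) * g1 +
        (fst q).re * Complex.I_sq
    · linear_combination (1/2 : ℂ) * g1 - (1/2 : ℂ) * e1
    · linear_combination (-1 : ℂ) * e3
    · linear_combination (-Complex.I/2) * f1 + (-Complex.I/2) * k1 +
        (snd q).re * Complex.I_sq
    · linear_combination (1/2 : ℂ) * k1 - (1/2 : ℂ) * f1
    · linear_combination (-1 : ℂ) * f3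
  · rintro ⟨a, b, rfl⟩
    constructor <;>
    · rw [DQ.ext_iff']
      simp only [DQ.fst_cs, DQ.snd_cs, DQ.fst_qi_re, DQ.fst_qi_imI, DQ.fst_qi_imJ, DQ.fst_qi_imK, DQ.snd_qi, DQ.fst_qj_re, DQ.fst_qj_imI, DQ.fst_qj_imJ, DQ.fst_qj_imK, DQ.snd_qj, DQ.fst_qk_re, DQ.fst_qk_imI, DQ.fst_qk_imJ, DQ.fst_qk_imK,
        DQ.snd_qk, DualNumber.fst_eps, DualNumber.snd_eps, fst_mul, DualNumber.snd_mul, fst_add, snd_add,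
        fst_sub, snd_sub, fst_inl, snd_inl, fst_inr, snd_inr, fst_zero, snd_zero, add_zero,
        zero_add, zero_mul, mul_zero, mul_one, one_mul, sub_zero, zero_sub, Quaternion.ext_iff,
        Quaternion.re_mul, Quaternion.imI_mul,
        Quaternion.imJ_mul, Quaternion.imK_mul, Quaternion.re_add, Quaternion.imI_add,
        Quaternion.imJ_add, Quaternion.imK_add, Quaternion.re_sub, Quaternion.imI_sub,
        Quaternion.imJ_sub, Quaternion.imK_sub, Quaternion.re_zero, Quaternion.imI_zero,
        Quaternion.imJ_zero, Quaternion.imK_zero, Quaternion.algebraMap_def, Quaternion.re_coe,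
        Quaternion.imI_coe, Quaternion.imJ_coe, Quaternion.imK_coe]
      refine ⟨⟨trivial, trivial, ?_, ?_⟩, trivial, trivial, ?_, ?_⟩
      all_goals first
        | ring1
        | linear_combination a * Complex.I_sq
        | linear_combination b * Complex.I_sq
end
end

section
/- Let q₁, …, qₙ be real dual quaternions such that for each m the norm qₘ·conj(qₘ) is a real scalar (a real multiple of 1), where conj denotes quaternion conjugation applied to both the primal and the dual part. If the product q₁·q₂⋯qₙ equals a·1 + b·ε for real numbers a, b with a ≠ 0, then b = 0. -/
open Quaternion TrivSqZeroExt DualNumber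
noncomputable section
/-- The real dual quaternions. -/
abbrev DQR : Type := DualNumber (Quaternion ℝ)
/-- A real scalar, viewed as a dual quaternion. -/
def rs (r : ℝ) : DQR := inl (algebraMap ℝ ℍ[ℝ] r)
/-- Quaternion conjugation of a dual quaternion, applied to both
the primal and dual part. -/
def dconj (q : DQR) : DQR := inl (star (fst q)) + inr (star (snd q))

lemma fst_dconj (q : DQR) : fst (dconj q) = star (fst q) := by simp [dconj]
lemma snd_dconj (q : DQR) : snd (dconj q) = star (snd q) := by simp [dconj]

lemma dconj_mul (x y : DQR) : dconj (x * y) = dconj y * dconj x := by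
  refine TrivSqZeroExt.ext ?_ ?_
  · simp [fst_dconj]
  · simp [snd_dconj, fst_dconj, TrivSqZeroExt.snd_mul, smul_eq_mul, op_smul_eq_mul, add_comm]

lemma rs_eq (r : ℝ) : rs r = algebraMap ℝ DQR r := by
  rw [rs, TrivSqZeroExt.algebraMap_eq_inl']

lemma rs_comm (r : ℝ) (x : DQR) : rs r * x = x * rs r := by
  rw [rs_eq]; exact Algebra.commutes r x

lemma prod_norm (l : List DQR) (h : ∀ x ∈ l, ∃ r : ℝ, x * dconj x = rs r) :
    ∃ r : ℝ, l.prod * dconj l.prod = rs r := by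
  induction l with
  | nil =>
    refine ⟨1, ?_⟩
    simp only [List.prod_nil]
    refine TrivSqZeroExt.ext ?_ ?_ <;> simp [fst_dconj, snd_dconj, rs]
  | cons x t ih =>
    obtain ⟨r, hr⟩ := ih (fun y hy => h y (List.mem_cons_of_mem x hy))
    obtain ⟨s, hs⟩ := h x List.mem_cons_self
    refine ⟨r * s, ?_⟩
    rw [List.prod_cons, dconj_mul, show x * t.prod * (dconj t.prod * dconj x)
      = x * (t.prod * dconj t.prod) * dconj x by rw [mul_assoc, mul_assoc, mul_assoc],
      hr, ← rs_comm, mul_assoc, hs, rs_eq, rs_eq, rs_eq, ← map_mul]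

/-- If each factor has real norm `qₘ · conj(qₘ)` and the product equals `a + bε`
with `a ≠ 0` real, then `b = 0`. -/
theorem dual_part_of_real_norm_product (n : ℕ) (q : Fin n → DQR)
    (hnorm : ∀ m : Fin n, ∃ r : ℝ, q m * dconj (q m) = rs r)
    (a b : ℝ) (ha : a ≠ 0)
    (hprod : (List.ofFn q).prod = rs a + rs b * ε) :
    b = 0 := by
  obtain ⟨r, hr⟩ := prod_norm (List.ofFn q) (by
    intro x hx
    obtain ⟨i, rfl⟩ := List.mem_ofFn.mp hx
    exact hnorm i)
  rw [hprod] at hr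
  have hP : dconj (rs a + rs b * ε) = rs a + rs b * ε := by
    refine TrivSqZeroExt.ext ?_ ?_ <;>
      simp [fst_dconj, snd_dconj, rs, ← QuaternionAlgebra.coe_algebraMap, Quaternion.star_coe]
  rw [hP] at hr
  have h2 := congrArg TrivSqZeroExt.snd hr
  simp [rs, TrivSqZeroExt.snd_mul, smul_eq_mul, op_smul_eq_mul,
    ← QuaternionAlgebra.coe_algebraMap, ← Quaternion.coe_mul, ← Quaternion.coe_add] at h2
  have h3 : a * b + b * a = 0 := by
    have := congrArg QuaternionAlgebra.re h2; simpa using this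
  have hab : a * b = 0 := by nlinarith [h3, mul_comm a b]
  exact (mul_eq_zero.mp hab).resolve_left ha
end
end

section
/- Let s₁, s₂, w₁, w₂, d₁, d₂ be real numbers with w₁ ≠ 0 and w₂ ≠ 0, and set gᵢ = (1 − (sᵢ/2)·ε𝐢)·(wᵢ·1 − 𝐤)·(1 − (dᵢ/2)·ε𝐤) for i = 1, 2, regarded as ℂ-dual quaternions. Suppose t₁, t₃ ∈ {I, −I}, t₂ ∈ ℂ with t₂ ≠ I and t₂ ≠ −I, and (t₁·1 − 𝐢)·g₁·(t₂·1 − 𝐢)·g₂·(t₃·1 − 𝐢) = 0. Then the Bennett conditions hold: s₂ = 0 and b₁ = ±b₂, where bᵢ = dᵢ·(wᵢ² + 1)/(2wᵢ). -/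
open Quaternion TrivSqZeroExt DualNumber

noncomputable section

set_option maxHeartbeats 16000000

/-- The joint dual quaternion `g = (1 - (s/2)ε𝐢)(w - 𝐤)(1 - (d/2)ε𝐤)`,
regarded as a ℂ-dual quaternion. -/
def g (s w d : ℝ) : DQ :=
  (1 - cs (s/2) * ε * qi) * (cs w - qk) * (1 - cs (d/2) * ε * qk)

/-- A quaternion given by its components, typed as `ℍ[ℂ]`. -/
def qm (a b c d : ℂ) : ℍ[ℂ] := ⟨a,b,c,d⟩
@[simp] lemma qm_re (a b c d : ℂ) : (qm a b c d).re = a := rfl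
@[simp] lemma qm_imI (a b c d : ℂ) : (qm a b c d).imI = b := rfl
@[simp] lemma qm_imJ (a b c d : ℂ) : (qm a b c d).imJ = c := rfl
@[simp] lemma qm_imK (a b c d : ℂ) : (qm a b c d).imK = d := rfl

lemma qi_re : qi.fst.re = 0 := rfl
lemma qi_imI : qi.fst.imI = 1 := rfl
lemma qi_imJ : qi.fst.imJ = 0 := rfl
lemma qi_imK : qi.fst.imK = 0 := rfl
lemma qi_snd : qi.snd = 0 := rfl
lemma qk_re : qk.fst.re = 0 := rfl
lemma qk_imI : qk.fst.imI = 0 := rfl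
lemma qk_imJ : qk.fst.imJ = 0 := rfl
lemma qk_imK : qk.fst.imK = 1 := rfl
lemma qk_snd : qk.snd = 0 := rfl

lemma fst_g (s w d : ℝ) : (g s w d).fst = qm (w:ℂ) 0 0 (-1) := by
  simp only [g, cs, qi_snd, qk_snd, fst_mul, fst_sub, fst_one, fst_inl, DualNumber.fst_eps,
    mul_zero, zero_mul, sub_zero, one_mul, mul_one]
  ext <;> simp [QuaternionAlgebra.algebraMap_eq, qi_re, qi_imI, qi_imJ, qi_imK, qk_re, qk_imI, qk_imJ, qk_imK]

lemma snd_g (s w d : ℝ) : (g s w d).snd = qm (-((d:ℂ)/2)) (-((s:ℂ)/2)*w) (-((s:ℂ)/2)) (-((d:ℂ)/2)*w) := by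
  simp only [g, cs, qi_snd, qk_snd, DualNumber.snd_mul, fst_mul, fst_sub, fst_one, fst_inl,
    DualNumber.fst_eps, DualNumber.snd_eps, snd_one, snd_sub, snd_inl,
    mul_zero, zero_mul, sub_zero, zero_sub, one_mul, mul_one, add_zero, zero_add, neg_zero]
  ext <;> simp [QuaternionAlgebra.algebraMap_eq, qi_re, qi_imI, qi_imJ, qi_imK, qk_re, qk_imI, qk_imJ, qk_imK, Quaternion.re_mul, Quaternion.imI_mul,
    Quaternion.imJ_mul, Quaternion.imK_mul] <;> ring

lemma fst_ct (t : ℂ) : (cs t - qi).fst = qm t (-1) 0 0 := by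
  simp only [cs, fst_sub, fst_inl]
  ext <;> simp [QuaternionAlgebra.algebraMap_eq, qi_re, qi_imI, qi_imJ, qi_imK, qk_re, qk_imI, qk_imJ, qk_imK]

lemma snd_ct (t : ℂ) : (cs t - qi).snd = 0 := by
  simp [cs, qi_snd]

/-- A near connection (a bond with `t₁, t₃ = ±I`) implies the Bennett conditions
`s₂ = 0` and `b₁ = ±b₂` where `bᵢ = dᵢ(wᵢ² + 1)/(2wᵢ)`. -/
theorem near_connection_implies_bennett
    (s₁ s₂ w₁ w₂ d₁ d₂ : ℝ) (hw₁ : w₁ ≠ 0) (hw₂ : w₂ ≠ 0)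
    (t₁ t₂ t₃ : ℂ)
    (ht₁ : t₁ = Complex.I ∨ t₁ = -Complex.I)
    (ht₃ : t₃ = Complex.I ∨ t₃ = -Complex.I)
    (ht₂ : t₂ ≠ Complex.I ∧ t₂ ≠ -Complex.I)
    (hbond : (cs t₁ - qi) * g s₁ w₁ d₁ * (cs t₂ - qi) * g s₂ w₂ d₂ * (cs t₃ - qi) = 0) :
    s₂ = 0 ∧ (d₁ * (w₁^2 + 1) / (2 * w₁) = d₂ * (w₂^2 + 1) / (2 * w₂) ∨
              d₁ * (w₁^2 + 1) / (2 * w₁) = -(d₂ * (w₂^2 + 1) / (2 * w₂))) := by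
  have hs := congrArg TrivSqZeroExt.snd hbond
  rw [DualNumber.snd_mul] at hs
  rw [DualNumber.snd_mul] at hs
  rw [DualNumber.snd_mul] at hs
  rw [DualNumber.snd_mul] at hs
  rw [fst_mul, fst_mul, fst_mul] at hs
  rw [snd_ct, snd_ct, snd_ct] at hs
  rw [snd_g, snd_g] at hs
  rw [fst_g, fst_g] at hs
  rw [fst_ct, fst_ct, fst_ct] at hs
  rw [snd_zero] at hs
  have hf := congrArg TrivSqZeroExt.fst hbond
  rw [fst_mul, fst_mul, fst_mul, fst_mul, fst_g, fst_g, fst_ct, fst_ct, fst_ct, fst_zero] at hf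
  rw [Quaternion.ext_iff] at hf hs
  obtain ⟨f0, f1, f2, f3⟩ := hf
  obtain ⟨g0, g1, g2, g3⟩ := hs
  clear f1 f3 g1 g3 hbond
  simp only [Quaternion.re_mul, Quaternion.imI_mul, Quaternion.imJ_mul, Quaternion.imK_mul,
    Quaternion.re_add, Quaternion.imI_add, Quaternion.imJ_add, Quaternion.imK_add,
    Quaternion.re_zero, Quaternion.imI_zero, Quaternion.imJ_zero, Quaternion.imK_zero,
    qm_re, qm_imI, qm_imJ, qm_imK]
    at f0 f2 g0 g2
  have ratio_neg : w₂*d₁ + w₁*d₂ + w₁*w₂*w₂*d₂ + w₁*w₁*w₂*d₁ = 0 →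
      d₁ * (w₁^2 + 1) / (2 * w₁) = -(d₂ * (w₂^2 + 1) / (2 * w₂)) := by
    intro hV
    field_simp
    linear_combination hV
  have ratio_pos : -(w₂*d₁) + w₁*d₂ + w₁*w₂*w₂*d₂ - w₁*w₁*w₂*d₁ = 0 →
      d₁ * (w₁^2 + 1) / (2 * w₁) = d₂ * (w₂^2 + 1) / (2 * w₂) := by
    intro hV
    field_simp
    linear_combination (-1:ℝ) * hV
  have s2zero : s₂*w₁*w₂ = 0 → s₂ = 0 := by
    intro hU
    rcases mul_eq_zero.mp hU with h | h
    · rcases mul_eq_zero.mp h with h' | h'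
      · exact h'
      · exact absurd h' hw₁
    · exact absurd h hw₂
  rcases ht₁ with rfl | rfl <;> rcases ht₃ with rfl | rfl
  · -- t₁ = I, t₃ = I
    have hKey : ((-8*s₂*w₁*w₂ : ℝ) : ℂ) +
        ((-4*w₂*d₁ - 4*w₁*d₂ - 4*w₁*w₂*w₂*d₂ - 4*w₁*w₁*w₂*d₁ : ℝ) : ℂ) * Complex.I = 0 := by
      push_cast
      linear_combination
        ((1/2)*(w₂:ℂ)*(d₂:ℂ) + (-1/2)*(w₂:ℂ)*(d₂:ℂ)*Complex.I*Complex.I + (1/2)*(w₂:ℂ)*(d₁:ℂ) + (-1/2)*(w₂:ℂ)*(d₁:ℂ)*Complex.I*Complex.I + (1/2)*(w₁:ℂ)*(d₂:ℂ) + (-1/2)*(w₁:ℂ)*(d₂:ℂ)*Complex.I*Complex.I + (1/2)*(w₁:ℂ)*(d₁:ℂ) + (-1/2)*(w₁:ℂ)*(d₁:ℂ)*Complex.I*Complex.I - (s₂:ℂ)*Complex.I - (s₂:ℂ)*(w₁:ℂ)*(w₂:ℂ)*Complex.I + (s₁:ℂ)*Complex.I - (s₁:ℂ)*(w₁:ℂ)*(w₂:ℂ)*Complex.I)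 * f0
        + (-1 + Complex.I*Complex.I + (w₁:ℂ)*(w₂:ℂ) - (w₁:ℂ)*(w₂:ℂ)*Complex.I*Complex.I) * g0
        + (-2*(w₂:ℂ)*(d₁:ℂ)*Complex.I - 2*(w₁:ℂ)*(d₂:ℂ)*Complex.I - 2*(w₁:ℂ)*(w₂:ℂ)*(w₂:ℂ)*(d₂:ℂ)*Complex.I - 2*(w₁:ℂ)*(w₁:ℂ)*(w₂:ℂ)*(d₁:ℂ)*Complex.I + (-1/2)*(s₂:ℂ) + (-1/2)*(s₂:ℂ)*Complex.I*Complex.I - 7*(s₂:ℂ)*(w₁:ℂ)*(w₂:ℂ) + (s₂:ℂ)*(w₁:ℂ)*(w₂:ℂ)*Complex.I*Complex.I + (-1/2)*(s₂:ℂ)*(w₁:ℂ)*(w₁:ℂ)*(w₂:ℂ)*(w₂:ℂ) + (-1/2)*(s₂:ℂ)*(w₁:ℂ)*(w₁:ℂ)*(w₂:ℂ)*(w₂:ℂ)*Complex.I*Complex.I + (1/2)*(s₁:ℂ) + (1/2)*(s₁:ℂ)*Complex.I*Complex.I + (-1/2)*(s₁:ℂ)*(w₁:ℂ)*(w₁:ℂ)*(w₂:ℂ)*(w₂:ℂ)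 + (-1/2)*(s₁:ℂ)*(w₁:ℂ)*(w₁:ℂ)*(w₂:ℂ)*(w₂:ℂ)*Complex.I*Complex.I) * Complex.I_sq
    rw [Complex.ext_iff] at hKey
    simp only [Complex.add_re, Complex.add_im, Complex.mul_re, Complex.mul_im,
      Complex.ofReal_re, Complex.ofReal_im, Complex.I_re, Complex.I_im, Complex.zero_re,
      Complex.zero_im, mul_zero, mul_one, zero_mul, sub_zero, zero_sub, add_zero, zero_add] at hKey
    obtain ⟨hU, hV⟩ := hKey
    refine ⟨s2zero (by linarith), Or.inr (ratio_neg (by linarith))⟩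
  · -- t₁ = I, t₃ = -I
    have hKey : ((-8*s₂*w₁*w₂ : ℝ) : ℂ) +
        ((-4*w₂*d₁ + 4*w₁*d₂ + 4*w₁*w₂*w₂*d₂ - 4*w₁*w₁*w₂*d₁ : ℝ) : ℂ) * Complex.I = 0 := by
      push_cast
      linear_combination
        (-(d₂:ℂ)*Complex.I - (d₁:ℂ)*Complex.I + (w₁:ℂ)*(w₂:ℂ)*(d₂:ℂ)*Complex.I + (w₁:ℂ)*(w₂:ℂ)*(d₁:ℂ)*Complex.I + (1/2)*(s₂:ℂ)*(w₂:ℂ) + (-1/2)*(s₂:ℂ)*(w₂:ℂ)*Complex.I*Complex.I + (-1/2)*(s₂:ℂ)*(w₁:ℂ) + (1/2)*(s₂:ℂ)*(w₁:ℂ)*Complex.I*Complex.I + (-1/2)*(s₁:ℂ)*(w₂:ℂ) + (1/2)*(s₁:ℂ)*(w₂:ℂ)*Complex.I*Complex.I + (-1/2)*(s₁:ℂ)*(w₁:ℂ) + (1/2)*(s₁:ℂ)*(w₁:ℂ)*Complex.I*Complex.I) * f2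
        + (-2*(w₂:ℂ)*Complex.I - 2*(w₁:ℂ)*Complex.I) * g2
        + (-2*(w₂:ℂ)*(d₁:ℂ)*Complex.I + 2*(w₁:ℂ)*(d₂:ℂ)*Complex.I + 2*(w₁:ℂ)*(w₂:ℂ)*(w₂:ℂ)*(d₂:ℂ)*Complex.I - 2*(w₁:ℂ)*(w₁:ℂ)*(w₂:ℂ)*(d₁:ℂ)*Complex.I + (-1/2)*(s₂:ℂ)*(w₂:ℂ)*(w₂:ℂ) + (-1/2)*(s₂:ℂ)*(w₂:ℂ)*(w₂:ℂ)*Complex.I*Complex.I - 7*(s₂:ℂ)*(w₁:ℂ)*(w₂:ℂ) + (s₂:ℂ)*(w₁:ℂ)*(w₂:ℂ)*Complex.I*Complex.I + (-1/2)*(s₂:ℂ)*(w₁:ℂ)*(w₁:ℂ) + (-1/2)*(s₂:ℂ)*(w₁:ℂ)*(w₁:ℂ)*Complex.I*Complex.I + (1/2)*(s₁:ℂ)*(w₂:ℂ)*(w₂:ℂ) + (1/2)*(s₁:ℂ)*(w₂:ℂ)*(w₂:ℂ)*Complex.I*Complex.I + (-1/2)*(s₁:ℂ)*(w₁:ℂ)*(w₁:ℂ)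 + (-1/2)*(s₁:ℂ)*(w₁:ℂ)*(w₁:ℂ)*Complex.I*Complex.I) * Complex.I_sq
    rw [Complex.ext_iff] at hKey
    simp only [Complex.add_re, Complex.add_im, Complex.mul_re, Complex.mul_im,
      Complex.ofReal_re, Complex.ofReal_im, Complex.I_re, Complex.I_im, Complex.zero_re,
      Complex.zero_im, mul_zero, mul_one, zero_mul, sub_zero, zero_sub, add_zero, zero_add] at hKey
    obtain ⟨hU, hV⟩ := hKey
    refine ⟨s2zero (by linarith), Or.inl (ratio_pos (by linarith))⟩
  · -- t₁ = -I, t₃ = I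
    have hKey : ((-8*s₂*w₁*w₂ : ℝ) : ℂ) +
        ((4*w₂*d₁ - 4*w₁*d₂ - 4*w₁*w₂*w₂*d₂ + 4*w₁*w₁*w₂*d₁ : ℝ) : ℂ) * Complex.I = 0 := by
      push_cast
      linear_combination
        ((d₂:ℂ)*Complex.I + (d₁:ℂ)*Complex.I - (w₁:ℂ)*(w₂:ℂ)*(d₂:ℂ)*Complex.I - (w₁:ℂ)*(w₂:ℂ)*(d₁:ℂ)*Complex.I + (1/2)*(s₂:ℂ)*(w₂:ℂ) + (-1/2)*(s₂:ℂ)*(w₂:ℂ)*Complex.I*Complex.I + (-1/2)*(s₂:ℂ)*(w₁:ℂ) + (1/2)*(s₂:ℂ)*(w₁:ℂ)*Complex.I*Complex.I + (-1/2)*(s₁:ℂ)*(w₂:ℂ) + (1/2)*(s₁:ℂ)*(w₂:ℂ)*Complex.I*Complex.I + (-1/2)*(s₁:ℂ)*(w₁:ℂ) + (1/2)*(s₁:ℂ)*(w₁:ℂ)*Complex.I*Complex.I) * f2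
        + (2*(w₂:ℂ)*Complex.I + 2*(w₁:ℂ)*Complex.I) * g2
        + (2*(w₂:ℂ)*(d₁:ℂ)*Complex.I - 2*(w₁:ℂ)*(d₂:ℂ)*Complex.I - 2*(w₁:ℂ)*(w₂:ℂ)*(w₂:ℂ)*(d₂:ℂ)*Complex.I + 2*(w₁:ℂ)*(w₁:ℂ)*(w₂:ℂ)*(d₁:ℂ)*Complex.I + (-1/2)*(s₂:ℂ)*(w₂:ℂ)*(w₂:ℂ) + (-1/2)*(s₂:ℂ)*(w₂:ℂ)*(w₂:ℂ)*Complex.I*Complex.I - 7*(s₂:ℂ)*(w₁:ℂ)*(w₂:ℂ) + (s₂:ℂ)*(w₁:ℂ)*(w₂:ℂ)*Complex.I*Complex.I + (-1/2)*(s₂:ℂ)*(w₁:ℂ)*(w₁:ℂ) + (-1/2)*(s₂:ℂ)*(w₁:ℂ)*(w₁:ℂ)*Complex.I*Complex.I + (1/2)*(s₁:ℂ)*(w₂:ℂ)*(w₂:ℂ) + (1/2)*(s₁:ℂ)*(w₂:ℂ)*(w₂:ℂ)*Complex.I*Complex.I + (-1/2)*(s₁:ℂ)*(w₁:ℂ)*(w₁:ℂ)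 + (-1/2)*(s₁:ℂ)*(w₁:ℂ)*(w₁:ℂ)*Complex.I*Complex.I) * Complex.I_sq
    rw [Complex.ext_iff] at hKey
    simp only [Complex.add_re, Complex.add_im, Complex.mul_re, Complex.mul_im,
      Complex.ofReal_re, Complex.ofReal_im, Complex.I_re, Complex.I_im, Complex.zero_re,
      Complex.zero_im, mul_zero, mul_one, zero_mul, sub_zero, zero_sub, add_zero, zero_add] at hKey
    obtain ⟨hU, hV⟩ := hKey
    refine ⟨s2zero (by linarith), Or.inl (ratio_pos (by linarith))⟩
  · -- t₁ = -I, t₃ = -I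
    have hKey : ((-8*s₂*w₁*w₂ : ℝ) : ℂ) +
        ((4*w₂*d₁ + 4*w₁*d₂ + 4*w₁*w₂*w₂*d₂ + 4*w₁*w₁*w₂*d₁ : ℝ) : ℂ) * Complex.I = 0 := by
      push_cast
      linear_combination
        ((1/2)*(w₂:ℂ)*(d₂:ℂ) + (-1/2)*(w₂:ℂ)*(d₂:ℂ)*Complex.I*Complex.I + (1/2)*(w₂:ℂ)*(d₁:ℂ) + (-1/2)*(w₂:ℂ)*(d₁:ℂ)*Complex.I*Complex.I + (1/2)*(w₁:ℂ)*(d₂:ℂ) + (-1/2)*(w₁:ℂ)*(d₂:ℂ)*Complex.I*Complex.I + (1/2)*(w₁:ℂ)*(d₁:ℂ) + (-1/2)*(w₁:ℂ)*(d₁:ℂ)*Complex.I*Complex.I + (s₂:ℂ)*Complex.I + (s₂:ℂ)*(w₁:ℂ)*(w₂:ℂ)*Complex.I - (s₁:ℂ)*Complex.I + (s₁:ℂ)*(w₁:ℂ)*(w₂:ℂ)*Complex.I) * f0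
        + (-1 + Complex.I*Complex.I + (w₁:ℂ)*(w₂:ℂ) - (w₁:ℂ)*(w₂:ℂ)*Complex.I*Complex.I) * g0
        + (2*(w₂:ℂ)*(d₁:ℂ)*Complex.I + 2*(w₁:ℂ)*(d₂:ℂ)*Complex.I + 2*(w₁:ℂ)*(w₂:ℂ)*(w₂:ℂ)*(d₂:ℂ)*Complex.I + 2*(w₁:ℂ)*(w₁:ℂ)*(w₂:ℂ)*(d₁:ℂ)*Complex.I + (-1/2)*(s₂:ℂ) + (-1/2)*(s₂:ℂ)*Complex.I*Complex.I - 7*(s₂:ℂ)*(w₁:ℂ)*(w₂:ℂ) + (s₂:ℂ)*(w₁:ℂ)*(w₂:ℂ)*Complex.I*Complex.I + (-1/2)*(s₂:ℂ)*(w₁:ℂ)*(w₁:ℂ)*(w₂:ℂ)*(w₂:ℂ) + (-1/2)*(s₂:ℂ)*(w₁:ℂ)*(w₁:ℂ)*(w₂:ℂ)*(w₂:ℂ)*Complex.I*Complex.I + (1/2)*(s₁:ℂ) + (1/2)*(s₁:ℂ)*Complex.I*Complex.I + (-1/2)*(s₁:ℂ)*(w₁:ℂ)*(w₁:ℂ)*(w₂:ℂ)*(w₂:ℂ)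 + (-1/2)*(s₁:ℂ)*(w₁:ℂ)*(w₁:ℂ)*(w₂:ℂ)*(w₂:ℂ)*Complex.I*Complex.I) * Complex.I_sq
    rw [Complex.ext_iff] at hKey
    simp only [Complex.add_re, Complex.add_im, Complex.mul_re, Complex.mul_im,
      Complex.ofReal_re, Complex.ofReal_im, Complex.I_re, Complex.I_im, Complex.zero_re,
      Complex.zero_im, mul_zero, mul_one, zero_mul, sub_zero, zero_sub, add_zero, zero_add] at hKey
    obtain ⟨hU, hV⟩ := hKey
    refine ⟨s2zero (by linarith), Or.inr (ratio_neg (by linarith))⟩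
end
end
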